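/- Under the tame structure of the previous statement, if I - S has ‖S‖_op < 1 and all seminorms of S finite, then the Neumann series Σ_{n≥0} S^n converges absolutely in each of the seminorms ‖·‖_1, ‖·‖_2, ‖·‖_{12}, and hence (I - S)⁻¹ has finite seminorms ‖·‖_1, ‖·‖_2, ‖·‖_{12}. -/

import Mathlib

open Filter

lemma neumann_geom_bound {C r ρ K : ℝ} (hC : 1 ≤ C) (hr : 0 ≤ r) (hrρ : r < ρ)
    (hK : 0 ≤ K) (b : ℕ → ℝ) (hb : ∀ n, 0 ≤ b n)
    (hrec : ∀ m n : ℕ, b (m + n) ≤ C * (r ^ m * b n + b m * r ^ n) + K * ρ ^ (m + n)) :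
    ∃ M : ℝ, 0 ≤ M ∧ ∀ n, b n ≤ M * ρ ^ n := by
  have hρ0 : 0 < ρ := lt_of_le_of_lt hr hrρ
  have hq0 : 0 ≤ r / ρ := div_nonneg hr hρ0.le
  have hq1 : r / ρ < 1 := (div_lt_one hρ0).mpr hrρ
  have htend : Tendsto (fun m : ℕ => C * (r / ρ) ^ m) atTop (nhds 0) := by
    simpa using (tendsto_pow_atTop_nhds_zero_of_lt_one hq0 hq1).const_mul C
  have hev : ∀ᶠ m in atTop, C * (r / ρ) ^ m < 1 / 3 :=
    htend.eventually (gt_mem_nhds (by norm_num : (0:ℝ) < 1 / 3))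
  rw [Filter.eventually_atTop] at hev
  obtain ⟨m₀, hm₀⟩ := hev
  obtain ⟨m, hm1, hqm⟩ : ∃ m : ℕ, 1 ≤ m ∧ C * (r / ρ) ^ m < 1 / 3 :=
    ⟨m₀ + 1, Nat.le_add_left 1 m₀, hm₀ _ (Nat.le_succ m₀)⟩
  have hrm : r ^ m = (r / ρ) ^ m * ρ ^ m := by
    rw [← mul_pow, div_mul_cancel₀ _ hρ0.ne']
  have hCr : C * r ^ m ≤ ρ ^ m / 3 := by
    rw [hrm, ← mul_assoc]
    have hρm : (0:ℝ) < ρ ^ m := pow_pos hρ0 m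
    nlinarith [hρm]
  set M0 : ℝ := ∑ i ∈ Finset.range (m + 1), b i / ρ ^ i with hM0def
  have hM0 : ∀ k ≤ m, b k ≤ M0 * ρ ^ k := by
    intro k hk
    have hmem : k ∈ Finset.range (m + 1) := Finset.mem_range.mpr (Nat.lt_succ_of_le hk)
    have hle : b k / ρ ^ k ≤ M0 :=
      Finset.single_le_sum (fun i _ => div_nonneg (hb i) (pow_pos hρ0 i).le) hmem
    have hρk : (0:ℝ) < ρ ^ k := pow_pos hρ0 k
    calc b k = (b k / ρ ^ k) * ρ ^ k := by field_simp
    _ ≤ M0 * ρ ^ k := by gcongr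
  have hM00 : 0 ≤ M0 :=
    Finset.sum_nonneg (fun i _ => div_nonneg (hb i) (pow_pos hρ0 i).le)
  set M1 : ℝ := (3 / 2) * (C * b m + K * ρ ^ m) / ρ ^ m with hM1def
  set M : ℝ := max M0 M1 with hMdef
  have hM0M : M0 ≤ M := le_max_left _ _
  have hMnn : 0 ≤ M := le_trans hM00 hM0M
  have hkey : C * b m + K * ρ ^ m ≤ (2 / 3) * M * ρ ^ m := by
    have hρm : (0:ℝ) < ρ ^ m := pow_pos hρ0 m
    have h1 : M1 ≤ M := le_max_right _ _
    have heq : C * b m + K * ρ ^ m = (2 / 3) * M1 * ρ ^ m := by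
      rw [hM1def]; field_simp
    rw [heq]
    nlinarith [hρm]
  refine ⟨M, hMnn, ?_⟩
  intro n
  induction n using Nat.strong_induction_on with
  | _ n ih =>
    by_cases hn : n ≤ m
    · exact le_trans (hM0 n hn) (mul_le_mul_of_nonneg_right hM0M (pow_pos hρ0 n).le)
    · push_neg at hn
      set j : ℕ := n - m with hjdef
      have hnj : n = m + j := by omega
      have hjn : j < n := by omega
      have hbj : b j ≤ M * ρ ^ j := ih j hjn
      have hrj : r ^ j ≤ ρ ^ j := pow_le_pow_left₀ hr hrρ.le j
      have hρj : (0:ℝ) < ρ ^ j := pow_pos hρ0 j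
      have hρm : (0:ℝ) < ρ ^ m := pow_pos hρ0 m
      have hC0 : (0:ℝ) < C := lt_of_lt_of_le one_pos hC
      calc b n = b (m + j) := by rw [hnj]
      _ ≤ C * (r ^ m * b j + b m * r ^ j) + K * ρ ^ (m + j) := hrec m j
      _ = C * r ^ m * b j + C * b m * r ^ j + K * (ρ ^ m * ρ ^ j) := by
          rw [pow_add]; ring
      _ ≤ (ρ ^ m / 3) * (M * ρ ^ j) + C * b m * ρ ^ j + K * ρ ^ m * ρ ^ j := by
          have h1 : C * r ^ m * b j ≤ (ρ ^ m / 3) * (M * ρ ^ j) := by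
            have := mul_le_mul hCr hbj (hb j) (by positivity)
            calc C * r ^ m * b j ≤ ρ ^ m / 3 * (M * ρ ^ j) := this
            _ = _ := by ring
          have h2 : C * b m * r ^ j ≤ C * b m * ρ ^ j := by
            have : 0 ≤ C * b m := mul_nonneg hC0.le (hb m)
            exact mul_le_mul_of_nonneg_left hrj this
          linarith
      _ ≤ M * ρ ^ n := by
          rw [hnj, pow_add]
          nlinarith [mul_le_mul_of_nonneg_right hkey hρj.le]


/-- In the tame Banach algebra (complete for the sum of the four (semi)norms),
if `op S < 1` then the Neumann series `Σ Sⁿ` converges absolutely in each of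
the seminorms `s1, s2, s12`, and `1 - S` is invertible. -/
theorem stmt5 {A : Type*} [NormedRing A] [CompleteSpace A]
    (op s1 s2 s12 : A → ℝ)
    (hnorm_eq : ∀ x : A, ‖x‖ = op x + s1 x + s2 x + s12 x)
    (hop0 : ∀ x, 0 ≤ op x) (hs10 : ∀ x, 0 ≤ s1 x)
    (hs20 : ∀ x, 0 ≤ s2 x) (hs120 : ∀ x, 0 ≤ s12 x)
    (hsub : ∀ x y, op (x * y) ≤ op x * op y)
    (hopI : op (1 : A) = 1)
    (C : ℝ) (hC : 1 ≤ C)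
    (h12 : ∀ S T : A, s12 (S * T) ≤
      C * (op S * s12 T + s1 S * s2 T + s2 S * s1 T + s12 S * op T))
    (h1 : ∀ S T : A, s1 (S * T) ≤ C * (op S * s1 T + s1 S * op T))
    (h2 : ∀ S T : A, s2 (S * T) ≤ C * (op S * s2 T + s2 S * op T))
    (S : A) (hS : op S < 1) :
    Summable (fun n : ℕ => s1 (S ^ n)) ∧
    Summable (fun n : ℕ => s2 (S ^ n)) ∧
    Summable (fun n : ℕ => s12 (S ^ n)) ∧
    ∃ T : A, HasSum (fun n : ℕ => S ^ n) T ∧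
      (1 - S) * T = 1 ∧ T * (1 - S) = 1 := by
  set r : ℝ := op S with hrdef
  have hr0 : 0 ≤ r := hop0 S
  set ρ : ℝ := (1 + r) / 2 with hρdef
  have hrρ : r < ρ := by rw [hρdef]; linarith
  have hρ1 : ρ < 1 := by rw [hρdef]; linarith
  have hρ0 : 0 < ρ := lt_of_le_of_lt hr0 hrρ
  have hC0 : (0:ℝ) < C := lt_of_lt_of_le one_pos hC
  -- op (S ^ n) ≤ r ^ n
  have hopn : ∀ n : ℕ, op (S ^ n) ≤ r ^ n := by
    intro n
    induction n with
    | zero => simp [hopI]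
    | succ n ih =>
      calc op (S ^ (n + 1)) = op (S ^ n * S) := by rw [pow_succ]
      _ ≤ op (S ^ n) * op S := hsub _ _
      _ ≤ r ^ n * r := mul_le_mul ih le_rfl hr0 (pow_nonneg hr0 n)
      _ = r ^ (n + 1) := by rw [pow_succ]
  have hpowadd : ∀ m n : ℕ, S ^ (m + n) = S ^ m * S ^ n := fun m n => pow_add S m n
  -- s1 recursion
  have hrec1 : ∀ m n : ℕ, s1 (S ^ (m + n)) ≤
      C * (r ^ m * s1 (S ^ n) + s1 (S ^ m) * r ^ n) + 0 * ρ ^ (m + n) := by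
    intro m n
    rw [hpowadd m n]
    calc s1 (S ^ m * S ^ n) ≤ C * (op (S ^ m) * s1 (S ^ n) + s1 (S ^ m) * op (S ^ n)) :=
        h1 _ _
    _ ≤ C * (r ^ m * s1 (S ^ n) + s1 (S ^ m) * r ^ n) + 0 * ρ ^ (m + n) := by
        have e1 := mul_le_mul_of_nonneg_right (hopn m) (hs10 (S ^ n))
        have e2 := mul_le_mul_of_nonneg_left (hopn n) (hs10 (S ^ m))
        have := mul_le_mul_of_nonneg_left (add_le_add e1 e2) hC0.le
        linarith
  have hrec2 : ∀ m n : ℕ, s2 (S ^ (m + n)) ≤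
      C * (r ^ m * s2 (S ^ n) + s2 (S ^ m) * r ^ n) + 0 * ρ ^ (m + n) := by
    intro m n
    rw [hpowadd m n]
    calc s2 (S ^ m * S ^ n) ≤ C * (op (S ^ m) * s2 (S ^ n) + s2 (S ^ m) * op (S ^ n)) :=
        h2 _ _
    _ ≤ _ := by
        have e1 := mul_le_mul_of_nonneg_right (hopn m) (hs20 (S ^ n))
        have e2 := mul_le_mul_of_nonneg_left (hopn n) (hs20 (S ^ m))
        have := mul_le_mul_of_nonneg_left (add_le_add e1 e2) hC0.le
        linarith
  obtain ⟨M1, hM1nn, hM1⟩ := neumann_geom_bound hC hr0 hrρ le_rfl _ (fun n => hs10 (S ^ n)) hrec1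
  obtain ⟨M2, hM2nn, hM2⟩ := neumann_geom_bound hC hr0 hrρ le_rfl _ (fun n => hs20 (S ^ n)) hrec2
  -- s12 recursion with cross term
  have hrec12 : ∀ m n : ℕ, s12 (S ^ (m + n)) ≤
      C * (r ^ m * s12 (S ^ n) + s12 (S ^ m) * r ^ n) + (2 * C * M1 * M2) * ρ ^ (m + n) := by
    intro m n
    rw [hpowadd m n]
    calc s12 (S ^ m * S ^ n) ≤ C * (op (S ^ m) * s12 (S ^ n) + s1 (S ^ m) * s2 (S ^ n)
        + s2 (S ^ m) * s1 (S ^ n) + s12 (S ^ m) * op (S ^ n)) := h12 _ _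
    _ ≤ _ := by
        have ha := hopn m; have hb := hopn n
        have hc := hs120 (S ^ m); have hd := hs120 (S ^ n)
        have h1m := hM1 m; have h1n := hM1 n
        have h2m := hM2 m; have h2n := hM2 n
        have e1 : s1 (S ^ m) * s2 (S ^ n) ≤ M1 * M2 * ρ ^ (m + n) := by
          rw [pow_add]
          calc s1 (S ^ m) * s2 (S ^ n) ≤ (M1 * ρ ^ m) * (M2 * ρ ^ n) :=
            mul_le_mul h1m h2n (hs20 _) (by positivity)
          _ = M1 * M2 * (ρ ^ m * ρ ^ n) := by ring
        have e2 : s2 (S ^ m) * s1 (S ^ n) ≤ M1 * M2 * ρ ^ (m + n) := by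
          rw [pow_add]
          calc s2 (S ^ m) * s1 (S ^ n) ≤ (M2 * ρ ^ m) * (M1 * ρ ^ n) :=
            mul_le_mul h2m h1n (hs10 _) (by positivity)
          _ = M1 * M2 * (ρ ^ m * ρ ^ n) := by ring
        have f1 := mul_le_mul_of_nonneg_right (hopn m) (hs120 (S ^ n))
        have f2 := mul_le_mul_of_nonneg_left (hopn n) (hs120 (S ^ m))
        have key := mul_le_mul_of_nonneg_left
          (add_le_add (add_le_add (add_le_add f1 e1) e2) f2) hC0.le
        have expand : C * (r ^ m * s12 (S ^ n) + M1 * M2 * ρ ^ (m + n)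
            + M1 * M2 * ρ ^ (m + n) + s12 (S ^ m) * r ^ n)
            = C * (r ^ m * s12 (S ^ n) + s12 (S ^ m) * r ^ n)
              + (2 * C * M1 * M2) * ρ ^ (m + n) := by ring
        linarith [key, expand.le]
  have hK12 : (0:ℝ) ≤ 2 * C * M1 * M2 := by positivity
  obtain ⟨M12, hM12nn, hM12⟩ :=
    neumann_geom_bound hC hr0 hrρ hK12 _ (fun n => hs120 (S ^ n)) hrec12
  -- geometric majorant summable
  have hgeo : Summable (fun n : ℕ => ρ ^ n) := summable_geometric_of_lt_one hρ0.le hρ1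
  have hsum1 : Summable (fun n : ℕ => s1 (S ^ n)) :=
    Summable.of_nonneg_of_le (fun n => hs10 _) hM1 (hgeo.mul_left M1)
  have hsum2 : Summable (fun n : ℕ => s2 (S ^ n)) :=
    Summable.of_nonneg_of_le (fun n => hs20 _) hM2 (hgeo.mul_left M2)
  have hsum12 : Summable (fun n : ℕ => s12 (S ^ n)) :=
    Summable.of_nonneg_of_le (fun n => hs120 _) hM12 (hgeo.mul_left M12)
  have hsumop : Summable (fun n : ℕ => op (S ^ n)) :=
    Summable.of_nonneg_of_le (fun n => hop0 _)
      (fun n => le_trans (hopn n) (pow_le_pow_left₀ hr0 hrρ.le n)) hgeo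
  refine ⟨hsum1, hsum2, hsum12, ?_⟩
  have hnormsum : Summable (fun n : ℕ => ‖S ^ n‖) := by
    have : (fun n : ℕ => ‖S ^ n‖) =
        fun n => op (S ^ n) + s1 (S ^ n) + s2 (S ^ n) + s12 (S ^ n) := by
      funext n; exact hnorm_eq _
    rw [this]
    exact ((hsumop.add hsum1).add hsum2).add hsum12
  have hsumS : Summable (fun n : ℕ => S ^ n) := hnormsum.of_norm
  set T : A := ∑' n : ℕ, S ^ n with hTdef
  have hT : HasSum (fun n : ℕ => S ^ n) T := hsumS.hasSum
  -- telescoping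
  have hTsucc : HasSum (fun n : ℕ => S ^ (n + 1)) (T - 1) := by
    refine (hasSum_nat_add_iff (f := fun n : ℕ => S ^ n) 1).mpr ?_
    simpa using hT
  have hleft : S * T = T - 1 := by
    have h := hT.mul_left S
    have heq : (fun n : ℕ => S * S ^ n) = fun n : ℕ => S ^ (n + 1) := by
      funext n; rw [pow_succ']
    rw [heq] at h
    exact h.unique hTsucc
  have hright : T * S = T - 1 := by
    have h := hT.mul_right S
    have heq : (fun n : ℕ => S ^ n * S) = fun n : ℕ => S ^ (n + 1) := by
      funext n; rw [pow_succ]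
    rw [heq] at h
    exact h.unique hTsucc
  refine ⟨T, hT, ?_, ?_⟩
  · rw [sub_mul, one_mul, hleft, sub_sub_cancel]
  · rw [mul_sub, mul_one, hright, sub_sub_cancel]
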